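/- arXiv:1102.2398 — 6 statements merged into one kernel-verified Lean document; each statement's English description precedes it below -/
import Mathlib

section
/- For every finite simple graph G on n vertices and every vertex ℓ, the number of spanning trees of G equals the determinant of the matrix obtained from the combinatorial Laplacian L of G by deleting the ℓ-th row and the ℓ-th column; in particular this determinant is independent of the choice of ℓ. -/
open Matrix
open scoped Classical

/-- Adjacency matrix of a simple graph, as a real matrix. -/
noncomputable def adjMat {n : ℕ} (G : SimpleGraph (Fin n)) : Matrix (Fin n) (Fin n) ℝ :=
  Matrix.of fun i j => if G.Adj i j then (1 : ℝ) else 0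

/-- Diagonal degree matrix of a simple graph. -/
noncomputable def degMat {n : ℕ} (G : SimpleGraph (Fin n)) : Matrix (Fin n) (Fin n) ℝ :=
  Matrix.diagonal fun i => (Nat.card (G.neighborSet i) : ℝ)

/-- Combinatorial Laplacian. -/
noncomputable def lapMat {n : ℕ} (G : SimpleGraph (Fin n)) : Matrix (Fin n) (Fin n) ℝ :=
  degMat G - adjMat G

/-- Number of spanning trees of `G`: spanning subgraphs of `G` that are trees. -/
noncomputable def numSpanningTrees {n : ℕ} (G : SimpleGraph (Fin n)) : ℕ :=
  Nat.card {H : SimpleGraph (Fin n) // H ≤ G ∧ H.IsTree}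

/-- Matrix logarithm via functional calculus (log of eigenvalues), with log 0 = 0. -/
noncomputable def matLog {n : ℕ} (M : Matrix (Fin n) (Fin n) ℝ) : Matrix (Fin n) (Fin n) ℝ :=
  if hM : M.IsHermitian then
    (hM.eigenvectorUnitary : Matrix (Fin n) (Fin n) ℝ) *
      Matrix.diagonal (fun i => Real.log (hM.eigenvalues i)) *
      star (hM.eigenvectorUnitary : Matrix (Fin n) (Fin n) ℝ)
  else 0

/-- Quantum relative entropy S(σ₁‖σ₂) = Tr(σ₁ log σ₁) − Tr(σ₁ log σ₂). -/
noncomputable def qRelEntropy {n : ℕ} (σ1 σ2 : Matrix (Fin n) (Fin n) ℝ) : ℝ :=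
  (σ1 * matLog σ1).trace - (σ1 * matLog σ2).trace

/-- Projection Π_ℓ = I − E_ℓℓ. -/
noncomputable def projP {n : ℕ} (ℓ : Fin n) : Matrix (Fin n) (Fin n) ℝ :=
  1 - Matrix.single ℓ ℓ 1

/-- Q_ℓ = E_ℓℓ. -/
noncomputable def projQ {n : ℕ} (ℓ : Fin n) : Matrix (Fin n) (Fin n) ℝ :=
  Matrix.single ℓ ℓ 1

/-- Pinching map Φ_ℓ. -/
noncomputable def pinch {n : ℕ} (ℓ : Fin n) (M : Matrix (Fin n) (Fin n) ℝ) :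
    Matrix (Fin n) (Fin n) ℝ :=
  projP ℓ * M * projP ℓ + projQ ℓ * M * projQ ℓ

/-- Maximum degree. -/
noncomputable def maxDeg {n : ℕ} (G : SimpleGraph (Fin n)) : ℕ :=
  Finset.univ.sup fun i => Nat.card (G.neighborSet i)


namespace KirchhoffAux



/-- indicator vector -/
def chi {m : ℕ} (u i : Fin m) : ℤ := if i = u then 1 else 0

/-- orientation sign -/
def sgn {m : ℕ} (a b : Fin m) : ℤ := if a ≤ b then 1 else -1

/-- incidence vector of an edge: +1 at min endpoint, −1 at max endpoint. -/
def inc {m : ℕ} (e : Sym2 (Fin m)) (i : Fin m) : ℤ :=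
  Sym2.lift ⟨fun a b => (if i = min a b then (1:ℤ) else 0) - (if i = max a b then 1 else 0),
    fun a b => by simp only [min_comm a b, max_comm a b]⟩ e

lemma inc_mk {m : ℕ} (a b i : Fin m) :
    inc s(a,b) i = (if i = min a b then (1:ℤ) else 0) - (if i = max a b then 1 else 0) := rfl

lemma inc_mk_of_lt {m : ℕ} {a b : Fin m} (h : a < b) (i : Fin m) :
    inc s(a,b) i = (if i = a then (1:ℤ) else 0) - (if i = b then 1 else 0) := by
  rw [inc_mk, min_eq_left h.le, max_eq_right h.le]

lemma sgn_mul_inc {m : ℕ} {a b : Fin m} (h : a ≠ b) (i : Fin m) :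
    sgn a b * inc s(a,b) i = chi a i - chi b i := by
  rcases h.lt_or_gt with h' | h'
  · rw [inc_mk_of_lt h', sgn, if_pos h'.le, chi, chi]; ring
  · rw [Sym2.eq_swap, inc_mk_of_lt h', sgn, if_neg (not_le.2 h'), chi, chi]; ring

lemma inc_mul_self {m : ℕ} {e : Sym2 (Fin m)} (he : ¬e.IsDiag) (i : Fin m) :
    inc e i * inc e i = if i ∈ e then 1 else 0 := by
  induction e with
  | _ a b =>
    rw [Sym2.mk_isDiag_iff] at he
    rcases Ne.lt_or_gt he with h | h
    · rw [inc_mk_of_lt h]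
      by_cases h1 : i = a <;> by_cases h2 : i = b <;>
        simp_all [Sym2.mem_iff] <;> omega
    · rw [Sym2.eq_swap, inc_mk_of_lt h]
      by_cases h1 : i = a <;> by_cases h2 : i = b <;>
        simp_all [Sym2.mem_iff] <;> omega

lemma inc_mul_of_ne {m : ℕ} {e : Sym2 (Fin m)} (he : ¬e.IsDiag) {i j : Fin m} (hij : i ≠ j) :
    inc e i * inc e j = if e = s(i,j) then -1 else 0 := by
  induction e with
  | _ a b =>
    rw [Sym2.mk_isDiag_iff] at he
    have key : ∀ a b : Fin m, a < b →
        inc s(a,b) i * inc s(a,b) j = if s(a,b) = s(i,j) then -1 else 0 := by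
      intro a b h
      rw [inc_mk_of_lt h i, inc_mk_of_lt h j]
      by_cases h1 : i = a <;> by_cases h2 : i = b <;> by_cases h3 : j = a <;>
        by_cases h4 : j = b <;> simp_all [Sym2.eq_iff] <;> omega
    rcases Ne.lt_or_gt he with h | h
    · exact key a b h
    · rw [Sym2.eq_swap]; exact key b a h


variable {n : ℕ} (G : SimpleGraph (Fin (n+1)))

/-- full incidence-style matrix, columns indexed by all of `Sym2`. -/
noncomputable def Nmat : Matrix (Fin (n+1)) (Sym2 (Fin (n+1))) ℤ :=
  Matrix.of fun i e => if e ∈ G.edgeSet then inc e i else 0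

lemma NNT_apply (i j : Fin (n+1)) : (Nmat G * (Nmat G)ᵀ) i j =
    if i = j then (G.degree i : ℤ) else if G.Adj i j then -1 else 0 := by
  rw [Matrix.mul_apply]
  have h1 : ∀ e : Sym2 (Fin (n+1)), Nmat G i e * (Nmat G)ᵀ e j =
      if e ∈ G.edgeFinset then inc e i * inc e j else 0 := by
    intro e
    simp only [Nmat, Matrix.transpose_apply, Matrix.of_apply, SimpleGraph.mem_edgeFinset]
    split_ifs <;> ring
  rw [Finset.sum_congr rfl fun e _ => h1 e, Finset.sum_ite_mem, Finset.univ_inter]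
  by_cases hij : i = j
  · subst hij
    rw [if_pos rfl]
    have h2 : ∀ e ∈ G.edgeFinset, inc e i * inc e i = if i ∈ e then 1 else 0 :=
      fun e he => inc_mul_self (SimpleGraph.not_isDiag_of_mem_edgeSet G
        (SimpleGraph.mem_edgeFinset.1 he)) i
    rw [Finset.sum_congr rfl h2, Finset.sum_boole]
    have h3 : G.edgeFinset.filter (fun e => i ∈ e) = G.incidenceFinset i := by
      ext e
      simp [SimpleGraph.mem_incidenceFinset, SimpleGraph.incidenceSet,
        SimpleGraph.mem_edgeFinset]
    rw [h3, SimpleGraph.card_incidenceFinset_eq_degree]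
  · rw [if_neg hij]
    have h2 : ∀ e ∈ G.edgeFinset, inc e i * inc e j = if e = s(i,j) then -1 else 0 :=
      fun e he => inc_mul_of_ne (SimpleGraph.not_isDiag_of_mem_edgeSet G
        (SimpleGraph.mem_edgeFinset.1 he)) hij
    rw [Finset.sum_congr rfl h2, Finset.sum_ite_eq' G.edgeFinset s(i,j) (fun _ => (-1:ℤ))]
    simp [SimpleGraph.mem_edgeFinset, SimpleGraph.mem_edgeSet]


lemma lap_eq : lapMat G = ((Nmat G) * (Nmat G)ᵀ).map (Int.cast : ℤ → ℝ) := by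
  ext i j
  rw [Matrix.map_apply, NNT_apply]
  by_cases hij : i = j
  · subst hij
    simp only [lapMat, degMat, adjMat, Matrix.sub_apply, Matrix.diagonal_apply_eq,
      Matrix.of_apply, if_neg (G.irrefl), if_pos rfl]
    rw [Nat.card_eq_fintype_card, SimpleGraph.card_neighborSet_eq_degree]
    push_cast; ring
  · simp only [lapMat, degMat, adjMat, Matrix.sub_apply, Matrix.diagonal_apply_ne _ hij,
      Matrix.of_apply, if_neg hij]
    split_ifs <;> push_cast <;> ring

variable (ℓ : Fin (n+1))

/-- reduced incidence matrix (row ℓ deleted) -/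
noncomputable def Amat : Matrix (Fin n) (Sym2 (Fin (n+1))) ℤ :=
  (Nmat G).submatrix ℓ.succAbove id

lemma reduced_lap : (lapMat G).submatrix ℓ.succAbove ℓ.succAbove
    = ((Amat G ℓ) * (Amat G ℓ)ᵀ).map (Int.cast : ℤ → ℝ) := by
  rw [lap_eq]
  ext i j
  simp [Amat, Matrix.mul_apply]


section CB
variable {N : ℕ} {α : Type*} [Fintype α] [DecidableEq α] [Inhabited α]

/-- enumeration of an `N`-element finset -/
noncomputable def enum (S : Finset α) : Fin N → α :=
  if h : S.card = N then fun k => ((Finset.equivFinOfCardEq h).symm k : α) else fun _ => default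

lemma enum_mem {S : Finset α} (h : S.card = N) (k : Fin N) : enum S k ∈ S := by
  rw [enum, dif_pos h]; exact Subtype.coe_prop _

lemma enum_inj {S : Finset α} (h : S.card = N) : Function.Injective (enum (N := N) S) := by
  rw [enum, dif_pos h]
  intro a b hab
  exact (Finset.equivFinOfCardEq h).symm.injective (Subtype.ext hab)

lemma enum_image {S : Finset α} (h : S.card = N) :
    Finset.image (enum (N := N) S) Finset.univ = S := by
  apply Finset.eq_of_subset_of_card_le
  · intro x hx
    obtain ⟨k, _, rfl⟩ := Finset.mem_image.1 hx
    exact enum_mem h k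
  · rw [Finset.card_image_of_injective _ (enum_inj h), Finset.card_univ, Fintype.card_fin, h]

lemma enum_surj_on {S : Finset α} (h : S.card = N) {x : α} (hx : x ∈ S) :
    ∃ k, enum (N := N) S k = x := by
  have := enum_image (S := S) h
  rw [← this] at hx
  obtain ⟨k, _, rfl⟩ := Finset.mem_image.1 hx
  exact ⟨k, rfl⟩

/-- Cauchy–Binet for `A * Aᵀ`. -/
theorem det_mul_transpose_eq_sum (A : Matrix (Fin N) α ℤ) :
    (A * Aᵀ).det = ∑ S ∈ Finset.univ.powersetCard N, (A.submatrix id (enum S)).det ^ 2 := by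
  classical
  -- Step 1: expand by multilinearity
  have hrow : (A * Aᵀ) = fun i => ∑ e : α, A i e • (fun j => A j e) := by
    funext i j
    simp [Matrix.mul_apply, Finset.sum_apply]
  have h1 : (A * Aᵀ).det
      = ∑ f : Fin N → α, (∏ i, A i (f i)) * (Matrix.of fun i j => A j (f i)).det := by
    calc (A * Aᵀ).det
        = Matrix.detRowAlternating (fun i => ∑ e : α, A i e • (fun j => A j e)) := by
          rw [← hrow]; rfl
      _ = ∑ f : Fin N → α, Matrix.detRowAlternating (fun i => A i (f i) • (fun j => A j (f i))) :=
          (Matrix.detRowAlternating.toMultilinearMap.map_sum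
            (g := fun i e => A i e • (fun j => A j e)))
      _ = _ := by
          refine Finset.sum_congr rfl fun f _ => ?_
          have h := MultilinearMap.map_smul_univ Matrix.detRowAlternating.toMultilinearMap
            (fun i => A i (f i)) (fun i => (fun j => A j (f i)))
          simp only [AlternatingMap.coe_multilinearMap] at h
          rw [h, smul_eq_mul]
          rfl
  rw [h1]
  set term : (Fin N → α) → ℤ :=
    fun f => (∏ i, A i (f i)) * (Matrix.of fun i j => A j (f i)).det with hterm
  -- Step 2: non-injective terms vanish
  rw [← Finset.sum_filter_add_sum_filter_not Finset.univ Function.Injective]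
  have h2 : ∑ f ∈ Finset.univ.filter (fun f : Fin N → α => ¬ Function.Injective f),
      term f = 0 := by
    refine Finset.sum_eq_zero fun f hf => ?_
    rw [Finset.mem_filter] at hf
    obtain ⟨a, b, hab, hne⟩ := Function.not_injective_iff.1 hf.2
    have : (Matrix.of fun i j => A j (f i)).det = 0 := by
      refine Matrix.det_zero_of_row_eq hne ?_
      funext j
      simp [hab]
    rw [hterm]
    simp only [this, mul_zero]
  rw [h2, add_zero]
  -- Step 3: group injective functions by their image
  have hmap : ∀ f ∈ Finset.univ.filter (fun f : Fin N → α => Function.Injective f),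
      Finset.image f Finset.univ ∈ Finset.univ.powersetCard N := by
    intro f hf
    rw [Finset.mem_filter] at hf
    rw [Finset.mem_powersetCard_univ, Finset.card_image_of_injective _ hf.2,
      Finset.card_univ, Fintype.card_fin]
  rw [← Finset.sum_fiberwise_of_maps_to hmap term]
  refine Finset.sum_congr rfl fun S hS => ?_
  have hScard : S.card = N := Finset.mem_powersetCard_univ.1 hS
  set g : Fin N → α := enum S with hg
  -- the fiber over S is in bijection with permutations
  have h3 : ∑ f ∈ (Finset.univ.filter fun f : Fin N → α => Function.Injective f).filter
        (fun f => Finset.image f Finset.univ = S), term f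
      = ∑ σ : Equiv.Perm (Fin N), term (g ∘ σ) := by
    symm
    refine Finset.sum_bij (fun σ _ => g ∘ σ) ?_ ?_ ?_ ?_
    · intro σ _
      have hinj : Function.Injective (g ∘ σ) := (enum_inj hScard).comp σ.injective
      rw [Finset.mem_filter, Finset.mem_filter]
      refine ⟨⟨Finset.mem_univ _, hinj⟩, ?_⟩
      apply Finset.eq_of_subset_of_card_le
      · intro x hx
        obtain ⟨k, _, rfl⟩ := Finset.mem_image.1 hx
        exact enum_mem hScard _
      · rw [Finset.card_image_of_injective _ hinj, Finset.card_univ, Fintype.card_fin, hScard]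
    · intro σ₁ _ σ₂ _ h
      apply Equiv.ext
      intro i
      exact (enum_inj hScard) (congrFun h i)
    · intro f hf
      rw [Finset.mem_filter, Finset.mem_filter] at hf
      obtain ⟨⟨-, hinj⟩, himg⟩ := hf
      have hmem : ∀ i, f i ∈ S := by
        intro i
        rw [← himg]
        exact Finset.mem_image_of_mem f (Finset.mem_univ i)
      set p : Fin N → Fin N := fun i => (Finset.equivFinOfCardEq hScard) ⟨f i, hmem i⟩ with hp
      have hpinj : Function.Injective p := by
        intro i j hij
        exact hinj (congrArg Subtype.val ((Finset.equivFinOfCardEq hScard).injective hij))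
      refine ⟨Equiv.ofBijective p ((Fintype.bijective_iff_injective_and_card p).2
        ⟨hpinj, rfl⟩), Finset.mem_univ _, ?_⟩
      funext i
      show g (p i) = f i
      rw [hg, enum, dif_pos hScard, hp]
      simp
    · intro σ _
      rfl
  rw [h3]
  -- Step 4: sum over permutations gives det squared
  set M2 : Matrix (Fin N) (Fin N) ℤ := A.submatrix id g with hM2
  have h4 : ∀ σ : Equiv.Perm (Fin N),
      term (g ∘ σ) = ((Equiv.Perm.sign σ : ℤ) * ∏ i, A (σ⁻¹ i) (g i)) * M2.det := by
    intro σ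
    have e1 : (Matrix.of fun i j => A j (g (σ i))) = (M2ᵀ).submatrix σ id := by
      ext i j; rfl
    have e2 : (∏ i, A i (g (σ i))) = ∏ i, A (σ⁻¹ i) (g i) := by
      rw [← Equiv.prod_comp σ⁻¹ (fun i => A i (g (σ i)))]
      refine Finset.prod_congr rfl fun i _ => ?_
      rw [Equiv.Perm.inv_def, Equiv.apply_symm_apply]
    show (∏ i, A i (g (σ i))) * (Matrix.of fun i j => A j (g (σ i))).det = _
    rw [e1, Matrix.det_permute, Matrix.det_transpose, e2]
    push_cast
    ring
  rw [Finset.sum_congr rfl fun σ _ => h4 σ, ← Finset.sum_mul]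
  have h5 : ∑ σ : Equiv.Perm (Fin N), (Equiv.Perm.sign σ : ℤ) * ∏ i, A (σ⁻¹ i) (g i)
      = M2.det := by
    rw [← Equiv.sum_comp (Equiv.inv (Equiv.Perm (Fin N)))
      (fun σ => (Equiv.Perm.sign σ : ℤ) * ∏ i, A (σ⁻¹ i) (g i))]
    rw [Matrix.det_apply]
    refine Finset.sum_congr rfl fun σ _ => ?_
    simp only [Equiv.inv_apply, Equiv.Perm.sign_inv, inv_inv]
    rw [Units.smul_def, zsmul_eq_mul]
    rfl
  rw [h5, sq]

end CB

section Walks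
variable {m : ℕ} {H : SimpleGraph (Fin m)}

/-- signed multiplicity of edge `e` in walk `w` -/
noncomputable def coeff {u v : Fin m} (w : H.Walk u v) (e : Sym2 (Fin m)) : ℤ :=
  ((w.darts.filter (fun d => d.edge = e)).map (fun d => sgn d.toProd.1 d.toProd.2)).sum

lemma coeff_nil {u : Fin m} (e : Sym2 (Fin m)) :
    coeff (SimpleGraph.Walk.nil : H.Walk u u) e = 0 := rfl

lemma coeff_cons {u v x : Fin m} (h : H.Adj u v) (w : H.Walk v x) (e : Sym2 (Fin m)) :
    coeff (SimpleGraph.Walk.cons h w) e = (if s(u,v) = e then sgn u v else 0) + coeff w e := by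
  simp only [coeff, SimpleGraph.Walk.darts_cons, List.filter_cons]
  have hd : (SimpleGraph.Dart.mk (u, v) h).edge = s(u,v) := rfl
  by_cases he : s(u,v) = e
  · rw [if_pos he]
    simp [hd, he]
  · rw [if_neg he]
    simp [hd, he]

lemma coeff_eq_zero_of_not_mem {u v : Fin m} (w : H.Walk u v) {e : Sym2 (Fin m)}
    (he : e ∉ w.edges) : coeff w e = 0 := by
  have hfil : w.darts.filter (fun d => d.edge = e) = [] := by
    rw [List.filter_eq_nil_iff]
    intro d hd hde
    rw [decide_eq_true_eq] at hde
    exact he (hde ▸ List.mem_map_of_mem (f := SimpleGraph.Dart.edge) hd)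
  simp [coeff, hfil]

lemma sum_coeff_mul_inc {u v : Fin m} (w : H.Walk u v) (i : Fin m) :
    ∑ e : Sym2 (Fin m), coeff w e * inc e i = chi u i - chi v i := by
  induction w with
  | nil => simp [coeff_nil]
  | @cons a b c h w ih =>
    have hstep : ∀ e : Sym2 (Fin m),
        coeff (SimpleGraph.Walk.cons h w) e * inc e i
          = (if s(a,b) = e then sgn a b * inc e i else 0) + coeff w e * inc e i := by
      intro e
      rw [coeff_cons, add_mul, ite_mul, zero_mul]
    rw [Finset.sum_congr rfl fun e _ => hstep e, Finset.sum_add_distrib, ih,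
      Finset.sum_ite_eq Finset.univ s(a,b) (fun e => sgn a b * inc e i),
      if_pos (Finset.mem_univ _), sgn_mul_inc h.ne]
    ring

lemma sum_comp_coeff {k : ℕ} (g : Fin k → Sym2 (Fin m)) (hg : Function.Injective g)
    {u v : Fin m} (w : H.Walk u v)
    (hsupp : ∀ e, coeff w e ≠ 0 → e ∈ Finset.image g Finset.univ)
    (F : Sym2 (Fin m) → ℤ) :
    ∑ kk : Fin k, coeff w (g kk) * F (g kk) = ∑ e : Sym2 (Fin m), coeff w e * F e := by
  rw [← Finset.sum_image (g := g) (f := fun e => coeff w e * F e)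
    (fun x _ y _ hxy => hg hxy)]
  refine Finset.sum_subset (Finset.subset_univ _) fun e _ hen => ?_
  have : coeff w e = 0 := by
    by_contra hc
    exact hen (hsupp e hc)
  rw [this, zero_mul]

lemma exists_coeff_ne_zero {u : Fin m} {w : H.Walk u u} (hw : w.IsCycle) :
    ∃ e ∈ w.edges, coeff w e ≠ 0 := by
  cases w with
  | nil => exact absurd rfl hw.ne_nil
  | @cons _ b _ h w' =>
    refine ⟨s(u, b), by simp [SimpleGraph.Walk.edges_cons], ?_⟩
    rw [coeff_cons, if_pos rfl]
    have hnodup := hw.edges_nodup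
    rw [SimpleGraph.Walk.edges_cons, List.nodup_cons] at hnodup
    rw [coeff_eq_zero_of_not_mem w' hnodup.1, add_zero]
    unfold sgn
    split_ifs <;> norm_num

end Walks

instance {m : ℕ} : Inhabited (Sym2 (Fin (m+1))) := ⟨s(0,0)⟩

lemma sum_reach_inc {m : ℕ} {H : SimpleGraph (Fin m)} {v : Fin m} {e : Sym2 (Fin m)}
    (he : e ∈ H.edgeSet) :
    ∑ u : Fin m, (if H.Reachable v u then (1:ℤ) else 0) * inc e u = 0 := by
  induction e with
  | _ a b =>
    have hadj : H.Adj a b := he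
    have h1 : ∀ u, (if H.Reachable v u then (1:ℤ) else 0) * inc s(a,b) u
        = (if u = min a b then (if H.Reachable v u then (1:ℤ) else 0) else 0)
          - (if u = max a b then (if H.Reachable v u then (1:ℤ) else 0) else 0) := by
      intro u; rw [inc_mk]; split_ifs <;> ring
    rw [Finset.sum_congr rfl fun u _ => h1 u, Finset.sum_sub_distrib,
      Finset.sum_ite_eq' Finset.univ (min a b), Finset.sum_ite_eq' Finset.univ (max a b)]
    simp only [Finset.mem_univ, if_true]
    have hadj' : H.Adj (min a b) (max a b) := by
      rcases le_total a b with h | h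
      · rwa [min_eq_left h, max_eq_right h]
      · rw [min_eq_right h, max_eq_left h]; exact hadj.symm
    by_cases h : H.Reachable v (min a b)
    · rw [if_pos h, if_pos (h.trans hadj'.reachable)]; ring
    · rw [if_neg h, if_neg (fun hh => h (hh.trans hadj'.symm.reachable))]; ring

lemma detS_sq (S : Finset (Sym2 (Fin (n+1)))) (hScard : S.card = n) :
    ((Amat G ℓ).submatrix id (enum S)).det ^ 2
      = if (↑S : Set (Sym2 (Fin (n+1)))) ⊆ G.edgeSet
            ∧ (SimpleGraph.fromEdgeSet (↑S : Set (Sym2 (Fin (n+1))))).IsTree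
        then 1 else 0 := by
  classical
  set g : Fin n → Sym2 (Fin (n+1)) := enum S with hg
  set B : Matrix (Fin n) (Fin n) ℤ := (Amat G ℓ).submatrix id g with hB
  by_cases hsub : (↑S : Set (Sym2 (Fin (n+1)))) ⊆ G.edgeSet
  · set H := SimpleGraph.fromEdgeSet (↑S : Set (Sym2 (Fin (n+1)))) with hH
    have hedgeH : H.edgeSet = ↑S := by
      rw [hH, SimpleGraph.edgeSet_fromEdgeSet]
      ext e
      constructor
      · rintro ⟨he, -⟩; exact he
      · intro he
        exact ⟨he, G.not_isDiag_of_mem_edgeSet (hsub he)⟩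
    have hBentry : ∀ i k, B i k = inc (g k) (ℓ.succAbove i) := by
      intro i k
      have : g k ∈ G.edgeSet := hsub (enum_mem hScard k)
      simp [hB, Amat, Nmat, this]
    have hsupp : ∀ (u v : Fin (n+1)) (w : H.Walk u v) (e : Sym2 (Fin (n+1))),
        coeff w e ≠ 0 → e ∈ Finset.image g Finset.univ := by
      intro u v w e hc
      have hmem : e ∈ w.edges := by
        by_contra hn; exact hc (coeff_eq_zero_of_not_mem w hn)
      have heS : e ∈ H.edgeSet := w.edges_subset_edgeSet hmem
      rw [hedgeH] at heS
      rw [hg, enum_image hScard]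
      exact heS
    by_cases hconn : H.Connected
    · -- connected : determinant is ±1, and the graph is a tree
      have hwalk : ∀ j : Fin n, H.Reachable (ℓ.succAbove j) ℓ :=
        fun j => hconn.preconnected _ _
      set C : Matrix (Fin n) (Fin n) ℤ :=
        Matrix.of fun k j => coeff ((hwalk j).some) (g k) with hC
      have hBC : B * C = 1 := by
        ext i j
        rw [Matrix.mul_apply]
        have h1 : ∀ k, B i k * C k j
            = coeff ((hwalk j).some) (g k) * inc (g k) (ℓ.succAbove i) := by
          intro k; rw [hBentry]; simp only [hC, Matrix.of_apply]; ring
        rw [Finset.sum_congr rfl fun k _ => h1 k,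
          sum_comp_coeff g (enum_inj hScard) _ (hsupp _ _ _) (fun e => inc e (ℓ.succAbove i)),
          sum_coeff_mul_inc]
        rw [Matrix.one_apply]
        unfold chi
        rw [if_neg (Fin.succAbove_ne ℓ i)]
        by_cases hij : i = j
        · subst hij; rw [if_pos rfl, if_pos rfl]; ring
        · rw [if_neg hij, if_neg (fun h => hij (Fin.succAbove_right_injective h))]; ring
      have hdet : B.det = 1 ∨ B.det = -1 := by
        have hunit : IsUnit B.det := IsUnit.of_mul_eq_one C.det
          (by rw [← Matrix.det_mul, hBC, Matrix.det_one])
        exact Int.isUnit_iff.mp hunit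
      have hacyc : H.IsAcyclic := by
        intro u w hw
        obtain ⟨e, heE, hce⟩ := exists_coeff_ne_zero hw
        set c : Fin n → ℤ := fun k => coeff w (g k) with hc
        have hmv : B.mulVec c = 0 := by
          ext i
          show ∑ k, B i k * c k = 0
          have h1 : ∀ k, B i k * c k = coeff w (g k) * inc (g k) (ℓ.succAbove i) := by
            intro k; rw [hBentry, hc]; ring
          rw [Finset.sum_congr rfl fun k _ => h1 k,
            sum_comp_coeff g (enum_inj hScard) _ (hsupp _ _ _)
              (fun e => inc e (ℓ.succAbove i)),
            sum_coeff_mul_inc]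
          ring
        have hc0 : c ≠ 0 := by
          have himg : e ∈ Finset.image g Finset.univ := by
            rw [hg, enum_image hScard]
            have hh := w.edges_subset_edgeSet heE
            rw [hedgeH] at hh
            exact hh
          obtain ⟨k₀, -, rfl⟩ := Finset.mem_image.1 himg
          intro h0
          exact hce (congrFun h0 k₀)
        have hzero : B.det = 0 := Matrix.exists_mulVec_eq_zero_iff.mp ⟨c, hc0, hmv⟩
        rcases hdet with h | h <;> rw [hzero] at h <;> norm_num at h
      rw [if_pos ⟨hsub, hconn, hacyc⟩]
      rcases hdet with h | h <;> rw [h] <;> norm_num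
    · -- disconnected : determinant is 0, and the graph is not a tree
      rw [if_neg (fun hP => hconn hP.2.isConnected)]
      have hpre : ¬ H.Preconnected := fun hp => hconn ⟨hp⟩
      rw [SimpleGraph.Preconnected] at hpre
      push_neg at hpre
      obtain ⟨u0, w0, huw⟩ := hpre
      obtain ⟨v, hv⟩ : ∃ v, ¬ H.Reachable ℓ v := by
        by_contra hno; push_neg at hno
        exact huw ((hno u0).symm.trans (hno w0))
      have hvℓ : v ≠ ℓ := fun h => hv (h ▸ SimpleGraph.Reachable.refl _)
      obtain ⟨i₀, hi₀⟩ := Fin.exists_succAbove_eq hvℓ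
      set c : Fin n → ℤ := fun i => if H.Reachable v (ℓ.succAbove i) then 1 else 0 with hc
      have hc0 : c ≠ 0 := by
        intro h0
        have := congrFun h0 i₀
        rw [hc] at this
        simp only [hi₀] at this
        rw [if_pos (SimpleGraph.Reachable.refl v)] at this
        norm_num at this
      have hvm : Matrix.vecMul c B = 0 := by
        ext k
        show ∑ i, c i * B i k = 0
        have hgk : g k ∈ H.edgeSet := by
          rw [hedgeH]; exact enum_mem hScard k
        set F : Fin (n+1) → ℤ :=
          fun u => (if H.Reachable v u then (1:ℤ) else 0) * inc (g k) u with hF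
        have h1 : ∀ i, c i * B i k = F (ℓ.succAbove i) := by
          intro i; rw [hBentry, hc, hF]
        have hsum := Fin.sum_univ_succAbove F ℓ
        have hFl : F ℓ = 0 := by
          rw [hF]
          simp only []
          rw [if_neg (fun h => hv h.symm), zero_mul]
        have htot : ∑ u, F u = 0 := by
          rw [hF]; convert sum_reach_inc (H := H) (v := v) (e := g k) hgk
        rw [Finset.sum_congr rfl fun i _ => h1 i]
        rw [htot, hFl, zero_add] at hsum
        exact hsum.symm
      have hzero : B.det = 0 := Matrix.exists_vecMul_eq_zero_iff.mp ⟨c, hc0, hvm⟩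
      rw [hzero]; ring
  · -- a column of zeros
    rw [if_neg (fun hP => hsub hP.1)]
    obtain ⟨e₀, he₀S, he₀⟩ : ∃ e₀ ∈ S, e₀ ∉ G.edgeSet := by
      by_contra hn; push_neg at hn
      exact hsub (fun e he => hn e he)
    obtain ⟨k₀, hk₀⟩ := enum_surj_on hScard he₀S
    have hzero : B.det = 0 := by
      refine Matrix.det_eq_zero_of_column_eq_zero k₀ (fun i => ?_)
      have hgk : g k₀ = e₀ := hk₀
      show (Amat G ℓ) (id i) (g k₀) = 0
      rw [hgk]
      simp [Amat, Nmat, he₀]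
    rw [hzero]; ring


/-- The spanning-tree count as a filtered finset of edge sets. -/
lemma count_spanning_trees :
    (((Finset.univ : Finset (Sym2 (Fin (n+1)))).powersetCard n).filter
      (fun S : Finset (Sym2 (Fin (n+1))) =>
        (↑S : Set (Sym2 (Fin (n+1)))) ⊆ G.edgeSet
          ∧ (SimpleGraph.fromEdgeSet (↑S : Set (Sym2 (Fin (n+1))))).IsTree)).card
    = numSpanningTrees G := by
  classical
  set T := (((Finset.univ : Finset (Sym2 (Fin (n+1)))).powersetCard n).filter
      (fun S : Finset (Sym2 (Fin (n+1))) =>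
        (↑S : Set (Sym2 (Fin (n+1)))) ⊆ G.edgeSet
          ∧ (SimpleGraph.fromEdgeSet (↑S : Set (Sym2 (Fin (n+1))))).IsTree)) with hT
  have e : {H : SimpleGraph (Fin (n+1)) // H ≤ G ∧ H.IsTree} ≃ {S // S ∈ T} := by
    refine
      { toFun := fun H => ⟨H.1.edgeFinset, ?_⟩
        invFun := fun S => ⟨SimpleGraph.fromEdgeSet (↑S.1 : Set (Sym2 (Fin (n+1)))), ?_, ?_⟩
        left_inv := ?_
        right_inv := ?_ }
    · obtain ⟨H, hle, htree⟩ := H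
      have hcard : H.edgeFinset.card = n := by
        have := htree.card_edgeFinset
        rw [Fintype.card_fin] at this
        omega
      rw [hT, Finset.mem_filter]
      refine ⟨Finset.mem_powersetCard_univ.2 hcard, ?_, ?_⟩
      · rw [SimpleGraph.coe_edgeFinset]
        exact SimpleGraph.edgeSet_mono hle
      · rw [SimpleGraph.coe_edgeFinset, SimpleGraph.fromEdgeSet_edgeSet]
        exact htree
    · have hmem := Finset.mem_filter.1 S.2
      calc SimpleGraph.fromEdgeSet (↑S.1 : Set (Sym2 (Fin (n+1))))
          ≤ SimpleGraph.fromEdgeSet G.edgeSet := SimpleGraph.fromEdgeSet_mono hmem.2.1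
        _ = G := SimpleGraph.fromEdgeSet_edgeSet G
    · have hmem := Finset.mem_filter.1 S.2
      exact hmem.2.2
    · rintro ⟨H, hle, htree⟩
      apply Subtype.ext
      show SimpleGraph.fromEdgeSet (↑H.edgeFinset : Set (Sym2 (Fin (n+1)))) = H
      rw [SimpleGraph.coe_edgeFinset, SimpleGraph.fromEdgeSet_edgeSet]
    · rintro ⟨S, hS⟩
      apply Subtype.ext
      dsimp only
      replace hS := Finset.mem_filter.1 hS
      apply Finset.coe_injective
      rw [SimpleGraph.coe_edgeFinset, SimpleGraph.edgeSet_fromEdgeSet]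
      ext x
      constructor
      · rintro ⟨hx, -⟩; exact hx
      · intro hx
        exact ⟨hx, G.not_isDiag_of_mem_edgeSet (hS.2.1 hx)⟩
  rw [numSpanningTrees, Nat.card_congr e, Nat.card_eq_fintype_card, Fintype.card_coe]

end KirchhoffAux

/-- Kirchhoff's Matrix-Tree Theorem: the number of spanning trees equals the
determinant of the Laplacian with the ℓ-th row and column deleted, for any ℓ. -/
theorem kirchhoff_matrix_tree (n : ℕ) (G : SimpleGraph (Fin (n + 1))) (ℓ : Fin (n + 1)) :
    (numSpanningTrees G : ℝ) =
      ((lapMat G).submatrix ℓ.succAbove ℓ.succAbove).det := by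
  classical
  open KirchhoffAux in
  rw [KirchhoffAux.reduced_lap G ℓ]
  have hmap : ((KirchhoffAux.Amat G ℓ * (KirchhoffAux.Amat G ℓ)ᵀ).map (Int.cast : ℤ → ℝ)).det
      = ((Int.castRingHom ℝ) ((KirchhoffAux.Amat G ℓ * (KirchhoffAux.Amat G ℓ)ᵀ).det)) := by
    rw [RingHom.map_det]
    rfl
  have key : (KirchhoffAux.Amat G ℓ * (KirchhoffAux.Amat G ℓ)ᵀ).det
      = (numSpanningTrees G : ℤ) := by
    rw [KirchhoffAux.det_mul_transpose_eq_sum,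
      Finset.sum_congr rfl (fun S hS =>
        KirchhoffAux.detS_sq G ℓ S (Finset.mem_powersetCard_univ.1 hS))]
    rw [Finset.sum_boole, KirchhoffAux.count_spanning_trees]
  rw [hmap, key]
  simp
end

section
/- For every finite simple graph G on n ≥ 2 vertices with maximum degree Δ_max > 0, the number of spanning trees satisfies τ(G) ≤ det(Δ)/Δ_max, where Δ is the diagonal degree matrix of G. -/
open Matrix
open scoped Classical

lemma exists_parent {n : ℕ} {H : SimpleGraph (Fin n)} (hc : H.Connected) {ℓ i : Fin n}
    (hi : i ≠ ℓ) : ∃ j, H.Adj i j ∧ H.dist j ℓ + 1 = H.dist i ℓ := by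
  obtain ⟨p, hp⟩ := (hc i ℓ).exists_walk_length_eq_dist
  cases p with
  | nil => exact absurd rfl hi
  | @cons _ j _ h q =>
    refine ⟨j, h, ?_⟩
    have h1 : H.dist j ℓ ≤ q.length := SimpleGraph.dist_le q
    have h2 : H.dist i ℓ ≤ H.dist i j + H.dist j ℓ := hc.dist_triangle
    have h3 : H.dist i j ≤ 1 := by
      simpa using SimpleGraph.dist_le h.toWalk
    simp [SimpleGraph.Walk.length_cons] at hp
    omega

noncomputable def pfun {n : ℕ} (H : SimpleGraph (Fin n)) (ℓ i : Fin n) : Fin n :=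
  if h : H.Connected ∧ i ≠ ℓ then Classical.choose (exists_parent h.1 h.2) else i

lemma pfun_spec {n : ℕ} {H : SimpleGraph (Fin n)} (hc : H.Connected) {ℓ i : Fin n}
    (hi : i ≠ ℓ) : H.Adj i (pfun H ℓ i) ∧ H.dist (pfun H ℓ i) ℓ + 1 = H.dist i ℓ := by
  rw [pfun, dif_pos ⟨hc, hi⟩]
  exact Classical.choose_spec (exists_parent hc hi)

lemma pfun_injOn {n : ℕ} {H : SimpleGraph (Fin n)} (hc : H.Connected) (ℓ : Fin n) :
    Set.InjOn (fun i => s(i, pfun H ℓ i)) (Finset.univ.erase ℓ) := by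
  intro i hi j hj hij
  simp only [Finset.coe_erase, Set.mem_diff, Finset.mem_coe, Finset.mem_univ,
    Set.mem_singleton_iff] at hi hj
  have hi' : i ≠ ℓ := by simpa using hi
  have hj' : j ≠ ℓ := by simpa using hj
  obtain ⟨-, di⟩ := pfun_spec hc hi'
  obtain ⟨-, dj⟩ := pfun_spec hc hj'
  rw [Sym2.eq_iff] at hij
  rcases hij with ⟨h, -⟩ | ⟨h1, h2⟩
  · exact h
  · rw [h2] at di; rw [← h1] at dj
    omega

lemma tree_edgeFinset_eq {n : ℕ} (ℓ : Fin n) {H : SimpleGraph (Fin n)} (ht : H.IsTree) :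
    H.edgeFinset = (Finset.univ.erase ℓ).image (fun i => s(i, pfun H ℓ i)) := by
  have hc := ht.isConnected
  refine (Finset.eq_of_subset_of_card_le ?_ ?_).symm
  · intro e he
    simp only [Finset.mem_image, Finset.mem_erase, Finset.mem_univ, and_true] at he
    obtain ⟨i, hi, rfl⟩ := he
    rw [SimpleGraph.mem_edgeFinset, SimpleGraph.mem_edgeSet]
    exact (pfun_spec hc hi).1
  · have h1 : H.edgeFinset.card + 1 = n := by
      simpa using ht.card_edgeFinset
    rw [Finset.card_image_of_injOn (pfun_injOn hc ℓ)]
    rw [Finset.card_erase_of_mem (Finset.mem_univ _), Finset.card_univ, Fintype.card_fin]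
    omega

lemma tau_le {n : ℕ} (G : SimpleGraph (Fin n)) (ℓ : Fin n) :
    numSpanningTrees G ≤ ∏ i ∈ Finset.univ.erase ℓ, Nat.card (G.neighborSet i) := by
  have key : Nat.card {H : SimpleGraph (Fin n) // H ≤ G ∧ H.IsTree}
      ≤ Nat.card (∀ i : {i : Fin n // i ≠ ℓ}, G.neighborSet i.val) := by
    refine Nat.card_le_card_of_injective
      (fun H => fun i => ⟨pfun H.1 ℓ i.1, ?_⟩) ?_
    · rw [SimpleGraph.mem_neighborSet]
      exact H.2.1 (pfun_spec H.2.2.isConnected i.2).1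
    · intro H1 H2 h
      have hfun : ∀ i : Fin n, i ≠ ℓ → pfun H1.1 ℓ i = pfun H2.1 ℓ i := by
        intro i hi
        exact congrArg Subtype.val (congrFun h ⟨i, hi⟩)
      apply Subtype.ext
      rw [← SimpleGraph.edgeFinset_inj,
        tree_edgeFinset_eq ℓ H1.2.2, tree_edgeFinset_eq ℓ H2.2.2]
      apply Finset.image_congr
      intro i hi
      simp only [Finset.coe_erase, Set.mem_diff, Finset.mem_coe, Finset.mem_univ,
        Set.mem_singleton_iff, true_and] at hi
      simp only []
      rw [hfun i hi]
  rw [Nat.card_pi] at key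
  refine le_trans key (le_of_eq ?_)
  rw [← Finset.prod_subtype (Finset.univ.erase ℓ)
    (fun x => by simp) (fun i => Nat.card (G.neighborSet i))]

/-- τ(G) ≤ det(Δ)/Δ_max. -/
theorem numSpanningTrees_le_detDeg_div_maxDeg (n : ℕ) (hn : 2 ≤ n)
    (G : SimpleGraph (Fin n)) (hmax : 0 < maxDeg G) :
    (numSpanningTrees G : ℝ) ≤ (degMat G).det / (maxDeg G : ℝ) := by
  obtain ⟨ℓ, -, hℓ⟩ := Finset.exists_mem_eq_sup Finset.univ
    ⟨⟨0, by omega⟩, Finset.mem_univ _⟩ (fun i => Nat.card (G.neighborSet i))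
  have hm : maxDeg G = Nat.card (G.neighborSet ℓ) := hℓ
  have hdet : (degMat G).det = ∏ i, (Nat.card (G.neighborSet i) : ℝ) :=
    Matrix.det_diagonal
  have hsplit : ∏ i, (Nat.card (G.neighborSet i) : ℝ)
      = (Nat.card (G.neighborSet ℓ) : ℝ) *
        ∏ i ∈ Finset.univ.erase ℓ, (Nat.card (G.neighborSet i) : ℝ) :=
    (Finset.mul_prod_erase _ _ (Finset.mem_univ ℓ)).symm
  have hpos : ((maxDeg G : ℝ)) ≠ 0 := by positivity
  rw [hdet, hsplit, ← hm]
  rw [mul_div_cancel_left₀ _ hpos]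
  have h2 : (numSpanningTrees G : ℝ)
      ≤ ((∏ i ∈ Finset.univ.erase ℓ, Nat.card (G.neighborSet i) : ℕ) : ℝ) :=
    Nat.cast_le.mpr (tau_le G ℓ)
  simpa [Nat.cast_prod] using h2
end

section
/- For every finite simple graph G on n ≥ 2 vertices, the number of spanning trees satisfies τ(G) ≤ (Tr(Δ)/n)^{n−1}, where Δ is the diagonal degree matrix of G, so Tr(Δ)/n is the average degree. -/
open Matrix
open scoped Classical

noncomputable def treeParent {n : ℕ} (T : SimpleGraph (Fin n)) (v i : Fin n) : Fin n :=
  if h : T.Reachable i v then (h.some.toPath : T.Path i v).1.getVert 1 else i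

lemma treeParent_eq {n : ℕ} {T : SimpleGraph (Fin n)} (hT : T.IsAcyclic) {v i : Fin n}
    (p : T.Path i v) : treeParent T v i = p.1.getVert 1 := by
  have h : T.Reachable i v := ⟨p.1⟩
  rw [treeParent, dif_pos h, hT.path_unique h.some.toPath p]

lemma treeParent_adj {n : ℕ} {T : SimpleGraph (Fin n)} (hT : T.IsTree) {v i : Fin n}
    (hi : i ≠ v) : T.Adj i (treeParent T v i) := by
  obtain ⟨w⟩ := hT.isConnected.preconnected i v
  let p : T.Path i v := w.toPath
  rw [treeParent_eq hT.IsAcyclic p]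
  have hlen : 0 < p.1.length := by
    rcases Nat.eq_zero_or_pos p.1.length with h | h
    · exact absurd (SimpleGraph.Walk.eq_of_length_eq_zero h) hi
    · exact h
  simpa using p.1.adj_getVert_succ hlen

lemma getVert_one_eq {n : ℕ} {T : SimpleGraph (Fin n)} (hT : T.IsAcyclic) {v a b : Fin n}
    (hab : T.Adj a b) (p : T.Path a v) (hb : b ∈ p.1.support) : p.1.getVert 1 = b := by
  have hq : p.1.takeUntil b hb = (SimpleGraph.Path.singleton hab).1 :=
    congrArg Subtype.val (hT.path_unique ⟨_, p.2.takeUntil hb⟩ (SimpleGraph.Path.singleton hab))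
  have hspec := p.1.take_spec hb
  conv_lhs => rw [← hspec, hq]
  simp [SimpleGraph.Path.singleton, SimpleGraph.Walk.getVert_append]

lemma treeParent_of_cons {n : ℕ} {T : SimpleGraph (Fin n)} (hT : T.IsAcyclic) {v a b : Fin n}
    (hab : T.Adj a b) (p : T.Path b v) (ha : a ∉ p.1.support) : treeParent T v a = b := by
  have hpath : (SimpleGraph.Walk.cons hab p.1).IsPath := p.2.cons ha
  rw [treeParent_eq hT ⟨_, hpath⟩]
  simp [SimpleGraph.Walk.getVert_cons_succ]

lemma adj_iff_treeParent {n : ℕ} {T : SimpleGraph (Fin n)} (hT : T.IsTree) (v a b : Fin n) :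
    T.Adj a b ↔ (a ≠ v ∧ treeParent T v a = b) ∨ (b ≠ v ∧ treeParent T v b = a) := by
  constructor
  · intro hab
    obtain ⟨w⟩ := hT.isConnected.preconnected b v
    let p : T.Path b v := w.toPath
    by_cases ha : a ∈ p.1.support
    · right
      have hbv : b ≠ v := by
        intro h
        subst h
        have : p = SimpleGraph.Path.nil := SimpleGraph.Path.loop_eq p
        rw [this] at ha
        simp at ha
        exact hab.ne (ha ▸ rfl)
      refine ⟨hbv, ?_⟩
      rw [treeParent_eq hT.IsAcyclic p]
      exact getVert_one_eq hT.IsAcyclic hab.symm p ha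
    · left
      have hav : a ≠ v := fun h => ha (h ▸ p.1.end_mem_support)
      exact ⟨hav, treeParent_of_cons hT.IsAcyclic hab p ha⟩
  · rintro (⟨hav, hp⟩ | ⟨hbv, hp⟩)
    · exact hp ▸ treeParent_adj hT hav
    · exact (hp ▸ treeParent_adj hT hbv).symm

lemma card_trees_le {n : ℕ} (G : SimpleGraph (Fin n)) (v : Fin n) :
    numSpanningTrees G ≤ ∏ i ∈ Finset.univ.erase v, G.degree i := by
  classical
  set D : Fin n → Finset (Fin n) := fun i => if i = v then {v} else G.neighborFinset i with hD
  have Ψmem : ∀ (H : {H : SimpleGraph (Fin n) // H ≤ G ∧ H.IsTree}) (i : Fin n) (h : ¬ i = v),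
      treeParent H.1 v i ∈ D i := by
    intro H i h
    simp only [hD, if_neg h]
    exact (SimpleGraph.mem_neighborFinset G i _).2 (H.2.1 (treeParent_adj H.2.2 h))
  let Ψ : {H : SimpleGraph (Fin n) // H ≤ G ∧ H.IsTree} → (∀ i : Fin n, {j // j ∈ D i}) :=
    fun H i => if h : i = v then ⟨v, by simp [hD, h]⟩ else ⟨treeParent H.1 v i, Ψmem H i h⟩
  have hinj : Function.Injective Ψ := by
    intro H1 H2 hEq
    have key : ∀ i, i ≠ v → treeParent H1.1 v i = treeParent H2.1 v i := by
      intro i hi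
      have h2 := congrFun hEq i
      simp only [Ψ, dif_neg hi] at h2
      exact congrArg Subtype.val h2
    apply Subtype.ext
    ext a b
    rw [adj_iff_treeParent H1.2.2 v a b, adj_iff_treeParent H2.2.2 v a b]
    constructor
    · rintro (⟨h1, h2⟩ | ⟨h1, h2⟩)
      · exact Or.inl ⟨h1, (key a h1).symm.trans h2⟩
      · exact Or.inr ⟨h1, (key b h1).symm.trans h2⟩
    · rintro (⟨h1, h2⟩ | ⟨h1, h2⟩)
      · exact Or.inl ⟨h1, (key a h1).trans h2⟩
      · exact Or.inr ⟨h1, (key b h1).trans h2⟩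
  have h1 : numSpanningTrees G ≤ Nat.card (∀ i : Fin n, {j // j ∈ D i}) :=
    Nat.card_le_card_of_injective Ψ hinj
  have h2 : Nat.card (∀ i : Fin n, {j // j ∈ D i}) = ∏ i, (D i).card := by
    simp [Nat.card_eq_fintype_card, Fintype.card_pi]
  have h3 : (∏ i, (D i).card) = ∏ i ∈ Finset.univ.erase v, G.degree i := by
    rw [← Finset.mul_prod_erase Finset.univ _ (Finset.mem_univ v)]
    have hv : (D v).card = 1 := by simp [hD]
    rw [hv, one_mul]
    refine Finset.prod_congr rfl fun i hi => ?_
    simp only [hD, if_neg (Finset.mem_erase.mp hi).1]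
    rfl
  rw [h2, h3] at h1
  exact h1

lemma amgm_pow {ι : Type*} (s : Finset ι) (hs : s.Nonempty) (z : ι → ℝ)
    (hz : ∀ i ∈ s, 0 ≤ z i) :
    ∏ i ∈ s, z i ≤ ((∑ i ∈ s, z i) / s.card) ^ s.card := by
  have hc : (0 : ℝ) < s.card := by exact_mod_cast Finset.card_pos.mpr hs
  have h := Real.geom_mean_le_arith_mean s (fun _ => 1) z (fun _ _ => zero_le_one)
    (by simpa using hc) hz
  simp only [Real.rpow_one, one_mul, Finset.sum_const, nsmul_eq_mul, mul_one] at h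
  have hP : 0 ≤ ∏ i ∈ s, z i := Finset.prod_nonneg hz
  have h2 := pow_le_pow_left₀ (Real.rpow_nonneg hP _) h s.card
  rwa [← Real.rpow_natCast ((∏ i ∈ s, z i) ^ (((s.card : ℝ))⁻¹)) s.card,
    ← Real.rpow_mul hP, inv_mul_cancel₀ (ne_of_gt hc), Real.rpow_one] at h2

/-- τ(G) ≤ (Tr(Δ)/n)^{n−1}. -/
theorem numSpanningTrees_le_avgDeg_pow (n : ℕ) (hn : 2 ≤ n)
    (G : SimpleGraph (Fin n)) :
    (numSpanningTrees G : ℝ) ≤ ((degMat G).trace / n) ^ (n - 1) := by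
  classical
  have hn0 : 0 < n := by omega
  have htr : (degMat G).trace = ∑ i, (G.degree i : ℝ) := by
    rw [degMat, Matrix.trace_diagonal]
    refine Finset.sum_congr rfl fun i _ => ?_
    rw [Nat.card_eq_fintype_card, SimpleGraph.card_neighborSet_eq_degree]
  obtain ⟨v, -, hv⟩ := Finset.exists_max_image Finset.univ (fun i => G.degree i)
    ⟨⟨0, hn0⟩, Finset.mem_univ _⟩
  have step1 : (numSpanningTrees G : ℝ) ≤ ∏ i ∈ Finset.univ.erase v, (G.degree i : ℝ) := by
    rw [← Nat.cast_prod]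
    exact_mod_cast card_trees_le G v
  have hcard : (Finset.univ.erase v).card = n - 1 := by
    simp [Finset.card_erase_of_mem]
  have hs : (Finset.univ.erase v).Nonempty := by
    rw [← Finset.card_pos, hcard]; omega
  have step2 := amgm_pow _ hs (fun i => (G.degree i : ℝ)) (fun i _ => by positivity)
  rw [hcard] at step2
  have hsum : (∑ i, (G.degree i : ℝ)) =
      (G.degree v : ℝ) + ∑ i ∈ Finset.univ.erase v, (G.degree i : ℝ) :=
    (Finset.add_sum_erase _ _ (Finset.mem_univ v)).symm
  have hmax : (∑ i, (G.degree i : ℝ)) ≤ n * (G.degree v : ℝ) := by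
    calc (∑ i, (G.degree i : ℝ)) ≤ ∑ _i : Fin n, (G.degree v : ℝ) :=
          Finset.sum_le_sum (fun i _ => by exact_mod_cast hv i (Finset.mem_univ i))
      _ = n * (G.degree v : ℝ) := by simp [mul_comm]
  have hcast : ((n - 1 : ℕ) : ℝ) = (n : ℝ) - 1 := by
    rw [Nat.cast_sub (by omega)]; norm_num
  have h1pos : (0 : ℝ) < ((n - 1 : ℕ) : ℝ) := by
    rw [hcast]
    have : (2 : ℝ) ≤ n := by exact_mod_cast hn
    linarith
  have hnpos : (0 : ℝ) < n := by exact_mod_cast hn0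
  have hdiv : (∑ i ∈ Finset.univ.erase v, (G.degree i : ℝ)) / ((n - 1 : ℕ) : ℝ)
      ≤ (∑ i, (G.degree i : ℝ)) / n := by
    rw [div_le_div_iff₀ h1pos hnpos, hcast]
    nlinarith [hsum, hmax]
  have hnn : (0 : ℝ) ≤ (∑ i ∈ Finset.univ.erase v, (G.degree i : ℝ)) / ((n - 1 : ℕ) : ℝ) := by
    positivity
  calc (numSpanningTrees G : ℝ) ≤ ∏ i ∈ Finset.univ.erase v, (G.degree i : ℝ) := step1
    _ ≤ ((∑ i ∈ Finset.univ.erase v, (G.degree i : ℝ)) / ((n - 1 : ℕ) : ℝ)) ^ (n - 1) := step2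
    _ ≤ ((∑ i, (G.degree i : ℝ)) / n) ^ (n - 1) := pow_le_pow_left₀ hnn hdiv _
    _ = ((degMat G).trace / n) ^ (n - 1) := by rw [htr]
end

section
/- For every finite simple graph G on n ≥ 2 vertices with maximum degree Δ_max > 0, the number of spanning trees satisfies τ(G) ≤ (Tr(Δ)/n)^n / Δ_max, where Δ is the diagonal degree matrix of G. -/
open Matrix SimpleGraph Walk
open scoped Classical

/-- Parent function of a tree rooted at `r`. -/
lemma tree_parent_exists {V : Type*} {G : SimpleGraph V} (hG : G.IsTree) (r : V) :
    ∃ f : V → V, f r = r ∧ (∀ v, v ≠ r → G.Adj v (f v)) ∧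
      (∀ u v : V, G.Adj u v ↔ u ≠ v ∧ (f u = v ∨ f v = u)) := by
  choose p hp hp' using hG.existsUnique_path
  refine ⟨fun v => (p v r).getVert 1, ?_, ?_, ?_⟩
  · show (p r r).getVert 1 = r
    have h0 : (Walk.nil : G.Walk r r) = p r r := hp' r r Walk.nil IsPath.nil
    rw [← h0]; rfl
  · intro v hv
    have hnn : ¬ (p v r).Nil := not_nil_of_ne hv
    have hl : 0 < (p v r).length := not_nil_iff_lt_length.mp hnn
    have := (p v r).adj_getVert_succ (i := 0) hl
    simpa using this
  · have key : ∀ u v : V, G.Adj u v → (p v r).length ≤ (p u r).length →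
        (p u r).getVert 1 = v := by
      intro u v h hlen
      have hus : u ∉ (p v r).support := by
        intro hus
        have hdeq : (p v r).dropUntil u hus = p u r :=
          hp' u r _ ((hp v r).dropUntil hus)
        have hta := congrArg Walk.length ((p v r).take_spec hus)
        rw [Walk.length_append] at hta
        have h1 : 0 < ((p v r).takeUntil u hus).length := by
          rcases Nat.eq_zero_or_pos ((p v r).takeUntil u hus).length with h0 | h0
          · exact absurd (Walk.eq_of_length_eq_zero h0) h.ne'
          · exact h0
        have := congrArg Walk.length hdeq
        omega
      have hq : (Walk.cons h (p v r)).IsPath := by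
        rw [Walk.cons_isPath_iff]; exact ⟨hp v r, hus⟩
      have heq : Walk.cons h (p v r) = p u r := hp' u r _ hq
      rw [← heq, Walk.getVert_cons_succ, Walk.getVert_zero]
    intro u v
    constructor
    · intro h
      refine ⟨h.ne, ?_⟩
      rcases le_total (p v r).length (p u r).length with hle | hle
      · exact Or.inl (key u v h hle)
      · exact Or.inr (key v u h.symm hle)
    · rintro ⟨hne, hf | hf⟩ <;> dsimp only at hf
      · have hur : u ≠ r := by
          rintro rfl
          apply hne
          rw [← hf]
          have h0 : (Walk.nil : G.Walk u u) = p u u := hp' u u Walk.nil IsPath.nil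
          rw [← h0]; rfl
        have hnn : ¬ (p u r).Nil := not_nil_of_ne hur
        have hl : 0 < (p u r).length := not_nil_iff_lt_length.mp hnn
        have := (p u r).adj_getVert_succ (i := 0) hl
        rw [Walk.getVert_zero, hf] at this
        exact this
      · have hvr : v ≠ r := by
          rintro rfl
          apply hne
          rw [← hf]
          have h0 : (Walk.nil : G.Walk v v) = p v v := hp' v v Walk.nil IsPath.nil
          rw [← h0]; rfl
        have hnn : ¬ (p v r).Nil := not_nil_of_ne hvr
        have hl : 0 < (p v r).length := not_nil_iff_lt_length.mp hnn
        have := (p v r).adj_getVert_succ (i := 0) hl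
        rw [Walk.getVert_zero, hf] at this
        exact this.symm

lemma numSpanningTrees_le_prod {n : ℕ} (G : SimpleGraph (Fin n)) (r : Fin n) :
    numSpanningTrees G ≤ ∏ i ∈ Finset.univ.erase r, G.degree i := by
  classical
  set T : Fin n → Finset (Fin n) := fun i => if i = r then {r} else G.neighborFinset i with hT
  have hchoice : ∀ s : {H : SimpleGraph (Fin n) // H ≤ G ∧ H.IsTree},
      ∃ f : Fin n → Fin n, f r = r ∧ (∀ v, v ≠ r → s.1.Adj v (f v)) ∧
        (∀ u v, s.1.Adj u v ↔ u ≠ v ∧ (f u = v ∨ f v = u)) :=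
    fun s => tree_parent_exists s.2.2 r
  choose f hfr hfadj hfiff using hchoice
  have hmem : ∀ s i, f s i ∈ T i := by
    intro s i
    by_cases hi : i = r
    · subst hi; simp [hT, hfr s]
    · simp only [hT, if_neg hi, SimpleGraph.mem_neighborFinset]
      exact s.2.1 (hfadj s i hi)
  have hinj : Function.Injective
      (fun s : {H : SimpleGraph (Fin n) // H ≤ G ∧ H.IsTree} =>
        (fun i => (⟨f s i, hmem s i⟩ : {x // x ∈ T i}))) := by
    intro s t hst
    have hfe : ∀ i, f s i = f t i := fun i => congrArg Subtype.val (congrFun hst i)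
    apply Subtype.ext
    ext u v
    rw [hfiff s, hfiff t, hfe u, hfe v]
  have hle := Nat.card_le_card_of_injective _ hinj
  rw [numSpanningTrees]
  refine hle.trans ?_
  rw [Nat.card_eq_fintype_card, Fintype.card_pi]
  apply le_of_eq
  have hc : ∀ i, Fintype.card {x // x ∈ T i} = (T i).card := fun i => Fintype.card_coe _
  calc ∏ i, Fintype.card {x // x ∈ T i} = ∏ i, (T i).card :=
        Finset.prod_congr rfl fun i _ => hc i
    _ = ∏ i ∈ Finset.univ.erase r, G.degree i := by
        rw [← Finset.prod_erase_mul Finset.univ _ (Finset.mem_univ r)]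
        have h1 : (T r).card = 1 := by simp [hT]
        rw [h1, mul_one]
        refine Finset.prod_congr rfl fun i hi => ?_
        have hi' := (Finset.mem_erase.mp hi).1
        simp only [hT, if_neg hi']
        rfl

lemma natCard_neighborSet {n : ℕ} (G : SimpleGraph (Fin n)) (i : Fin n) :
    Nat.card (G.neighborSet i) = G.degree i := by
  rw [Nat.card_eq_fintype_card]
  convert G.card_neighborSet_eq_degree i

theorem main_aux (n : ℕ) (hn : 2 ≤ n)
    (G : SimpleGraph (Fin n)) (hmax : 0 < Finset.univ.sup fun i => Nat.card (G.neighborSet i)) :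
    (numSpanningTrees G : ℝ) ≤
      (((Matrix.diagonal fun i => (Nat.card (G.neighborSet i) : ℝ)).trace) / n) ^ n /
        ((Finset.univ.sup fun i => Nat.card (G.neighborSet i) : ℕ) : ℝ) := by
  classical
  haveI : Nonempty (Fin n) := ⟨⟨0, by omega⟩⟩
  obtain ⟨r, -, hr⟩ := Finset.exists_mem_eq_sup Finset.univ Finset.univ_nonempty
    (fun i => Nat.card (G.neighborSet i))
  have hn0 : (n : ℝ) ≠ 0 := Nat.cast_ne_zero.mpr (by omega)
  have htr : (Matrix.diagonal fun i => (Nat.card (G.neighborSet i) : ℝ)).trace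
      = ∑ i, (G.degree i : ℝ) := by
    rw [Matrix.trace_diagonal]
    exact Finset.sum_congr rfl fun i _ => by rw [natCard_neighborSet]
  rw [htr, hr, natCard_neighborSet]
  have hD : (0 : ℝ) < (G.degree r : ℝ) := by
    have := hmax
    rw [hr, natCard_neighborSet] at this
    exact_mod_cast this
  rw [le_div_iff₀ hD]
  have h1 : (numSpanningTrees G : ℝ) * (G.degree r : ℝ)
      ≤ (∏ i ∈ Finset.univ.erase r, (G.degree i : ℝ)) * (G.degree r : ℝ) := by
    apply mul_le_mul_of_nonneg_right _ hD.le
    have := numSpanningTrees_le_prod G r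
    calc (numSpanningTrees G : ℝ) ≤ ((∏ i ∈ Finset.univ.erase r, G.degree i : ℕ) : ℝ) := by
          exact_mod_cast this
      _ = _ := by rw [Nat.cast_prod]
  refine h1.trans ?_
  rw [Finset.prod_erase_mul Finset.univ _ (Finset.mem_univ r)]
  -- AM-GM
  have hz : ∀ i ∈ Finset.univ, (0:ℝ) ≤ (G.degree i : ℝ) := fun i _ => Nat.cast_nonneg _
  have hw : ∀ i ∈ (Finset.univ : Finset (Fin n)), (0:ℝ) ≤ 1/n := fun _ _ => by positivity
  have hw' : ∑ _i : Fin n, (1/n : ℝ) = 1 := by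
    rw [Finset.sum_const, Finset.card_univ, Fintype.card_fin, nsmul_eq_mul]
    field_simp
  have h := Real.geom_mean_le_arith_mean_weighted Finset.univ (fun _ => 1/n)
    (fun i => (G.degree i : ℝ)) hw hw' hz
  have hsum : ∑ i, (1/(n:ℝ)) * (G.degree i : ℝ) = (∑ i, (G.degree i : ℝ)) / n := by
    rw [← Finset.mul_sum]; ring
  have h2 : (∏ i, (G.degree i : ℝ) ^ (1/(n:ℝ)))^n ≤ ((∑ i, (G.degree i : ℝ)) / n)^n := by
    rw [← hsum]
    exact pow_le_pow_left₀ (Finset.prod_nonneg fun i _ =>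
      Real.rpow_nonneg (Nat.cast_nonneg _) _) h n
  refine le_trans ?_ h2
  rw [← Finset.prod_pow]
  refine le_of_eq (Finset.prod_congr rfl fun i _ => ?_)
  rw [← Real.rpow_natCast ((G.degree i:ℝ) ^ (1/(n:ℝ))) n,
    ← Real.rpow_mul (Nat.cast_nonneg _)]
  rw [one_div, inv_mul_cancel₀ hn0, Real.rpow_one]

/-- τ(G) ≤ (Tr(Δ)/n)^n / Δ_max. -/
theorem numSpanningTrees_le_avgDeg_div_maxDeg (n : ℕ) (hn : 2 ≤ n)
    (G : SimpleGraph (Fin n)) (hmax : 0 < maxDeg G) :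
    (numSpanningTrees G : ℝ) ≤ ((degMat G).trace / n) ^ n / (maxDeg G : ℝ) := by
  exact main_aux n hn G hmax
end

section
/- For every finite simple graph G on n ≥ 2 vertices, the number of spanning trees satisfies τ(G) ≤ (n/(n−1))^{n−1} · det(Δ)^{1 − 1/n}, where Δ is the diagonal degree matrix of G. -/
open Matrix
open scoped Classical

section Aux
open SimpleGraph
variable {n : ℕ}


/-- Chosen path in a tree from `i` to `ℓ`. -/
noncomputable def tPath {H : SimpleGraph (Fin n)} (hT : H.IsTree) (i ℓ : Fin n) :
    H.Walk i ℓ :=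
  (hT.existsUnique_path i ℓ).choose

lemma tPath_isPath {H : SimpleGraph (Fin n)} (hT : H.IsTree) (i ℓ : Fin n) :
    (tPath hT i ℓ).IsPath :=
  (hT.existsUnique_path i ℓ).choose_spec.1

lemma tPath_eq {H : SimpleGraph (Fin n)} (hT : H.IsTree) {i ℓ : Fin n}
    (p : H.Walk i ℓ) (hp : p.IsPath) : p = tPath hT i ℓ :=
  (hT.existsUnique_path i ℓ).choose_spec.2 p hp

/-- Parent of `i` in the tree rooted at `ℓ`. -/
noncomputable def par {H : SimpleGraph (Fin n)} (hT : H.IsTree) (ℓ i : Fin n) : Fin n :=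
  (tPath hT i ℓ).getVert 1

lemma par_adj {H : SimpleGraph (Fin n)} (hT : H.IsTree) {ℓ i : Fin n} (h : i ≠ ℓ) :
    H.Adj i (par hT ℓ i) := by
  have hnil : ¬ (tPath hT i ℓ).Nil := by
    intro hN
    exact h (SimpleGraph.Walk.Nil.eq hN)
  simpa [par] using SimpleGraph.Walk.adj_snd hnil

lemma par_step {H : SimpleGraph (Fin n)} (hT : H.IsTree) {ℓ a b : Fin n} (ha : a ≠ ℓ)
    (hab : H.Adj a b) : par hT ℓ a = b ∨ (b ≠ ℓ ∧ par hT ℓ b = a) := by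
  by_cases hb : b = ℓ
  · subst hb
    left
    have hp : (SimpleGraph.Walk.cons hab .nil).IsPath := by
      simp [hab.ne]
    have := tPath_eq hT _ hp
    rw [par, ← this]
    simp
  · set p := tPath hT b ℓ with hpdef
    by_cases hmem : a ∈ p.support
    · right
      refine ⟨hb, ?_⟩
      have hq : (p.takeUntil a hmem).IsPath := (tPath_isPath hT b ℓ).takeUntil hmem
      have hsingle : (SimpleGraph.Walk.cons hab.symm .nil : H.Walk b a) = p.takeUntil a hmem := by
        have := hT.IsAcyclic.path_unique ⟨SimpleGraph.Walk.cons hab.symm .nil, by simp [hab.ne']⟩ ⟨p.takeUntil a hmem, hq⟩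
        exact congrArg Subtype.val this
      have hspec := p.take_spec hmem
      rw [← hsingle] at hspec
      rw [par, ← hpdef, ← hspec]
      simp
    · left
      have hp : (SimpleGraph.Walk.cons hab p).IsPath :=
        (tPath_isPath hT b ℓ).cons hmem
      have := tPath_eq hT _ hp
      rw [par, ← this]
      simp

lemma adj_iff_par {H : SimpleGraph (Fin n)} (hT : H.IsTree) (ℓ : Fin n) (a b : Fin n) :
    H.Adj a b ↔ (a ≠ ℓ ∧ par hT ℓ a = b) ∨ (b ≠ ℓ ∧ par hT ℓ b = a) := by
  constructor
  · intro hab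
    by_cases ha : a = ℓ
    · subst ha
      have hb : b ≠ a := hab.ne'
      rcases par_step hT hb hab.symm with h | h
      · exact Or.inr ⟨hb, h⟩
      · exact absurd rfl h.1
    · rcases par_step hT ha hab with h | h
      · exact Or.inl ⟨ha, h⟩
      · exact Or.inr h
  · rintro (⟨ha, rfl⟩ | ⟨hb, rfl⟩)
    · exact par_adj hT ha
    · exact (par_adj hT hb).symm

lemma card_spanning_trees_le (G : SimpleGraph (Fin n)) (ℓ : Fin n) :
    Nat.card {H : SimpleGraph (Fin n) // H ≤ G ∧ H.IsTree} ≤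
      ∏ i ∈ Finset.univ.erase ℓ, Nat.card (G.neighborSet i) := by
  have key : Nat.card {H : SimpleGraph (Fin n) // H ≤ G ∧ H.IsTree} ≤
      Nat.card (∀ i : {i : Fin n // i ≠ ℓ}, G.neighborSet i.val) := by
    apply Nat.card_le_card_of_injective
      (fun x i => ⟨par x.2.2 ℓ i.val, x.2.1 (par_adj x.2.2 i.prop)⟩)
    rintro ⟨H₁, h₁le, h₁T⟩ ⟨H₂, h₂le, h₂T⟩ hF
    have hpar : ∀ i : Fin n, i ≠ ℓ → par h₁T ℓ i = par h₂T ℓ i := by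
      intro i hi
      have := congrFun hF ⟨i, hi⟩
      exact (Subtype.ext_iff.1 this)
    ext a b
    rw [adj_iff_par h₁T ℓ, adj_iff_par h₂T ℓ]
    constructor
    · rintro (⟨ha, h⟩ | ⟨hb, h⟩)
      · exact Or.inl ⟨ha, by rw [← hpar a ha]; exact h⟩
      · exact Or.inr ⟨hb, by rw [← hpar b hb]; exact h⟩
    · rintro (⟨ha, h⟩ | ⟨hb, h⟩)
      · exact Or.inl ⟨ha, by rw [hpar a ha]; exact h⟩
      · exact Or.inr ⟨hb, by rw [hpar b hb]; exact h⟩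
  refine key.trans ?_
  rw [Nat.card_pi]
  rw [← Finset.prod_subtype (Finset.univ.erase ℓ)
      (fun x => by simp [Finset.mem_erase]) (fun i => Nat.card (G.neighborSet i))]

lemma spanning_trees_empty (hn : 2 ≤ n) (G : SimpleGraph (Fin n)) {i : Fin n}
    (hi : Nat.card (G.neighborSet i) = 0) :
    Nat.card {H : SimpleGraph (Fin n) // H ≤ G ∧ H.IsTree} = 0 := by
  have : IsEmpty {H : SimpleGraph (Fin n) // H ≤ G ∧ H.IsTree} := by
    constructor
    rintro ⟨H, hle, hT⟩
    have : Nontrivial (Fin n) := Fin.nontrivial_iff_two_le.2 hn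
    obtain ⟨j, hj⟩ := exists_ne i
    have hadj : H.Adj i (par hT j i) := par_adj hT hj.symm
    have hG : G.Adj i (par hT j i) := hle hadj
    have : (G.neighborSet i).Nonempty := ⟨_, hG⟩
    rw [Set.nonempty_coe_sort.symm] at this
    have : 0 < Nat.card (G.neighborSet i) := Nat.card_pos
    omega
  simp [Nat.card_of_isEmpty]


end Aux

/-- τ(G) ≤ (n/(n−1))^{n−1} · det(Δ)^{1 − 1/n}. -/
theorem numSpanningTrees_le_detDeg_rpow' (n : ℕ) (hn : 2 ≤ n)
    (G : SimpleGraph (Fin n)) :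
    (numSpanningTrees G : ℝ) ≤
      ((n : ℝ) / ((n : ℝ) - 1)) ^ (n - 1) * (degMat G).det ^ (1 - 1 / (n : ℝ)) := by
  
  have hdet : (degMat G).det = ∏ i, (Nat.card (G.neighborSet i) : ℝ) := by
    simp [degMat, Matrix.det_diagonal]
  rw [hdet, numSpanningTrees]

  set d : Fin n → ℕ := fun i => Nat.card (G.neighborSet i) with hd
  have hn1 : (1 : ℝ) ≤ (n : ℝ) - 1 := by
    have : (2 : ℝ) ≤ (n : ℝ) := by exact_mod_cast hn
    linarith
  have hc1 : (1 : ℝ) ≤ ((n : ℝ) / ((n : ℝ) - 1)) ^ (n - 1) := by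
    apply one_le_pow₀
    rw [le_div_iff₀ (by linarith)]
    linarith
  have hexp : (0 : ℝ) < 1 - 1 / (n : ℝ) := by
    have h2 : (2 : ℝ) ≤ (n : ℝ) := by exact_mod_cast hn
    have : 1 / (n : ℝ) ≤ 1 / 2 := by
      apply one_div_le_one_div_of_le <;> linarith
    linarith
  by_cases h0 : ∃ i, d i = 0
  · obtain ⟨i, hi⟩ := h0
    rw [spanning_trees_empty hn G hi]
    have : ∏ j, (d j : ℝ) = 0 := by
      apply Finset.prod_eq_zero (Finset.mem_univ i)
      exact_mod_cast hi
    rw [this, Real.zero_rpow hexp.ne']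
    simp
  · push_neg at h0
    have hdpos : ∀ i, 0 < d i := fun i => Nat.pos_of_ne_zero (h0 i)
    obtain ⟨ℓ, -, hℓ⟩ := Finset.exists_max_image Finset.univ d
      ⟨⟨0, by omega⟩, Finset.mem_univ _⟩
    have hkey : (Nat.card {H : SimpleGraph (Fin n) // H ≤ G ∧ H.IsTree} : ℝ) ≤
        ∏ i ∈ Finset.univ.erase ℓ, (d i : ℝ) := by
      have := card_spanning_trees_le G ℓ
      push_cast
      exact_mod_cast this
    set P : ℝ := ∏ i, (d i : ℝ) with hP
    have hPpos : 0 < P := Finset.prod_pos fun i _ => by exact_mod_cast hdpos i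
    have hdl : (0:ℝ) < (d ℓ : ℝ) := by exact_mod_cast hdpos ℓ
    have hprod : (∏ i ∈ Finset.univ.erase ℓ, (d i : ℝ)) = P / (d ℓ : ℝ) := by
      rw [eq_div_iff hdl.ne']
      rw [hP, Finset.prod_erase_mul _ _ (Finset.mem_univ ℓ)]
    have hPle : P ≤ (d ℓ : ℝ) ^ n := by
      calc P ≤ ∏ _i : Fin n, (d ℓ : ℝ) :=
            Finset.prod_le_prod (fun i _ => by positivity)
              (fun i _ => by exact_mod_cast hℓ i (Finset.mem_univ i))
        _ = (d ℓ : ℝ) ^ n := by simp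
    have hroot : P ^ (1 / (n : ℝ)) ≤ (d ℓ : ℝ) := by
      have h1 : P ^ (1 / (n : ℝ)) ≤ ((d ℓ : ℝ) ^ n) ^ (1 / (n : ℝ)) :=
        Real.rpow_le_rpow hPpos.le hPle (by positivity)
      calc P ^ (1 / (n : ℝ)) ≤ ((d ℓ : ℝ) ^ n) ^ (1 / (n : ℝ)) := h1
        _ = (d ℓ : ℝ) := by
            rw [← Real.rpow_natCast (d ℓ : ℝ) n, ← Real.rpow_mul hdl.le]
            rw [mul_one_div, div_self (by positivity : (n:ℝ) ≠ 0), Real.rpow_one]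
    have hmain : P / (d ℓ : ℝ) ≤ P ^ (1 - 1 / (n : ℝ)) := by
      rw [Real.rpow_sub hPpos, Real.rpow_one]
      apply div_le_div_of_nonneg_left hPpos.le (Real.rpow_pos_of_pos hPpos _) hroot
    calc (Nat.card {H : SimpleGraph (Fin n) // H ≤ G ∧ H.IsTree} : ℝ)
        ≤ P / (d ℓ : ℝ) := by rw [← hprod]; exact hkey
      _ ≤ P ^ (1 - 1 / (n : ℝ)) := hmain
      _ ≤ ((n : ℝ) / ((n : ℝ) - 1)) ^ (n - 1) * P ^ (1 - 1 / (n : ℝ)) :=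
          le_mul_of_one_le_left (Real.rpow_nonneg hPpos.le _) hc1
end

section
/- Let G be a finite simple graph on n ≥ 2 vertices with d = Tr(Δ) > 0, and let Ψ be the map on n×n matrices defined by Ψ(M) = (1/n)·Σ_{ℓ=1}^{n} Φ_ℓ(M). Then Ψ(Δ) = Δ, Ψ(A) = ((n−2)/n)·A, and for every k ≥ 1, the k-fold iterate satisfies Ψ^k(ρ) = Δ/d − ((n−2)/n)^k · A/d; in particular Ψ^k(ρ) converges to Δ/d as k → ∞. -/
open Matrix
open scoped Classical

section AuxPinch

open Matrix

private lemma sumStdAux (n : ℕ) : ∑ ℓ : Fin n, Matrix.single ℓ ℓ (1:ℝ) = 1 := by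
  ext i j
  simp only [Matrix.sum_apply, Matrix.single, Matrix.one_apply, Matrix.of_apply, ite_and]
  rw [Finset.sum_ite_eq' Finset.univ i (fun x => if x = j then (1:ℝ) else 0)]
  simp [eq_comm]

private lemma emeAux (n : ℕ) (ℓ : Fin n) (M : Matrix (Fin n) (Fin n) ℝ) :
    Matrix.single ℓ ℓ (1:ℝ) * M * Matrix.single ℓ ℓ (1:ℝ)
      = Matrix.single ℓ ℓ (M ℓ ℓ) := by
  ext i j
  by_cases hi : i = ℓ
  · by_cases hj : j = ℓ
    · subst hi; subst hj; simp
    · subst hi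
      rw [Matrix.mul_single_apply_of_ne _ _ _ _ _ hj,
        Matrix.single_apply_of_col_ne _ _ (fun h => hj h.symm)]
  · rw [Matrix.mul_apply]
    simp [Matrix.single_mul_apply_of_ne _ _ _ _ _ hi,
      Matrix.single_apply_of_row_ne (fun h => hi h.symm)]

private lemma sumEMEAux (n : ℕ) (M : Matrix (Fin n) (Fin n) ℝ) :
    ∑ ℓ : Fin n, Matrix.single ℓ ℓ (1:ℝ) * M * Matrix.single ℓ ℓ (1:ℝ)
      = Matrix.diagonal (fun i => M i i) := by
  simp only [emeAux]
  ext i j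
  simp only [Matrix.sum_apply, Matrix.single, Matrix.diagonal_apply, Matrix.of_apply,
    ite_and]
  rw [Finset.sum_ite_eq' Finset.univ i (fun x => if x = j then M x x else 0)]
  by_cases h : i = j <;> simp [h, eq_comm]

private lemma pinchEqAux {n : ℕ} (ℓ : Fin n) (M : Matrix (Fin n) (Fin n) ℝ) :
    pinch ℓ M = M - Matrix.single ℓ ℓ (1:ℝ) * M - M * Matrix.single ℓ ℓ (1:ℝ)
      + (Matrix.single ℓ ℓ (1:ℝ) * M * Matrix.single ℓ ℓ (1:ℝ)
        + Matrix.single ℓ ℓ (1:ℝ) * M * Matrix.single ℓ ℓ (1:ℝ)) := by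
  simp only [pinch, projP, projQ]
  noncomm_ring

private lemma sumPinchAux (n : ℕ) (M : Matrix (Fin n) (Fin n) ℝ) :
    ∑ ℓ : Fin n, pinch ℓ M
      = ((n : ℝ) - 2) • M + (2:ℝ) • Matrix.diagonal (fun i => M i i) := by
  have h1 : ∑ ℓ : Fin n, Matrix.single ℓ ℓ (1:ℝ) * M = M := by
    rw [← Finset.sum_mul, sumStdAux, one_mul]
  have h2 : ∑ ℓ : Fin n, M * Matrix.single ℓ ℓ (1:ℝ) = M := by
    rw [← Finset.mul_sum, sumStdAux, mul_one]
  have h3 := sumEMEAux n M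
  simp only [pinchEqAux]
  rw [Finset.sum_add_distrib, Finset.sum_sub_distrib, Finset.sum_sub_distrib,
    Finset.sum_add_distrib, h1, h2, h3, Finset.sum_const, Finset.card_univ, Fintype.card_fin,
    ← Nat.cast_smul_eq_nsmul ℝ]
  module

end AuxPinch

/-- Properties of the averaged pinching map Ψ = (1/n) Σ_ℓ Φ_ℓ:
it fixes Δ, scales A by (n−2)/n, its iterates satisfy
Ψ^k(ρ) = Δ/d − ((n−2)/n)^k · A/d, and Ψ^k(ρ) → Δ/d. -/
theorem averaged_pinching_iterates (n : ℕ) (hn : 2 ≤ n) (G : SimpleGraph (Fin n))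
    (hd : 0 < (degMat G).trace) :
    let d := (degMat G).trace
    let Ψ : Matrix (Fin n) (Fin n) ℝ → Matrix (Fin n) (Fin n) ℝ :=
      fun M => (n : ℝ)⁻¹ • ∑ ℓ : Fin n, pinch ℓ M
    let ρ := d⁻¹ • lapMat G
    Ψ (degMat G) = degMat G ∧
      Ψ (adjMat G) = (((n : ℝ) - 2) / n) • adjMat G ∧
      (∀ k : ℕ, 1 ≤ k →
        Ψ^[k] ρ = d⁻¹ • degMat G - (((n : ℝ) - 2) / n) ^ k • (d⁻¹ • adjMat G)) ∧
      Filter.Tendsto (fun k => Ψ^[k] ρ) Filter.atTop (nhds (d⁻¹ • degMat G)) := by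
  intro d Ψ ρ
  have hn0 : (n : ℝ) ≠ 0 := by positivity
  set c : ℝ := ((n : ℝ) - 2) / n with hc
  -- diagonal of deg matrix
  have hdiagD : Matrix.diagonal (fun i => degMat G i i) = degMat G := by
    ext i j
    by_cases h : i = j <;> simp [degMat, Matrix.diagonal_apply, h]
  have hdiagA : (fun i => adjMat G i i) = fun _ => (0:ℝ) := by
    funext i; simp [adjMat]
  -- Ψ on Δ
  have hPsiD : Ψ (degMat G) = degMat G := by
    show (n : ℝ)⁻¹ • ∑ ℓ : Fin n, pinch ℓ (degMat G) = degMat G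
    rw [sumPinchAux, hdiagD]
    match_scalars
    field_simp
    ring
  -- Ψ on A
  have hPsiA : Ψ (adjMat G) = c • adjMat G := by
    show (n : ℝ)⁻¹ • ∑ ℓ : Fin n, pinch ℓ (adjMat G) = c • adjMat G
    rw [sumPinchAux, hdiagA]
    rw [Matrix.diagonal_zero, smul_zero, add_zero, smul_smul, hc]
    congr 1
    field_simp
  -- Ψ on combinations x • Δ - y • A
  have hstep : ∀ x y : ℝ,
      Ψ (x • degMat G - y • adjMat G) = x • degMat G - (c * y) • adjMat G := by
    intro x y
    show (n : ℝ)⁻¹ • ∑ ℓ : Fin n, pinch ℓ (x • degMat G - y • adjMat G)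
      = x • degMat G - (c * y) • adjMat G
    have hdiag : Matrix.diagonal (fun i => (x • degMat G - y • adjMat G) i i)
        = x • degMat G := by
      ext i j
      by_cases h : i = j <;>
        simp [degMat, adjMat, Matrix.diagonal_apply, h]
    rw [sumPinchAux, hdiag, hc]
    match_scalars <;> field_simp <;> ring
  have hiter : ∀ k : ℕ, 1 ≤ k →
      Ψ^[k] ρ = d⁻¹ • degMat G - c ^ k • (d⁻¹ • adjMat G) := by
    intro k hk
    induction k with
    | zero => omega
    | succ m ih =>
      rcases Nat.eq_or_lt_of_le hk with h1 | h1
      · -- m = 0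
        have hm : m = 0 := by omega
        subst hm
        have hρ : ρ = d⁻¹ • degMat G - d⁻¹ • adjMat G := by
          show d⁻¹ • lapMat G = _
          rw [lapMat, smul_sub]
        rw [Function.iterate_one, hρ, hstep]
        rw [pow_one, smul_smul]
      · have hm : 1 ≤ m := by omega
        rw [Function.iterate_succ_apply', ih hm]
        have : c ^ m • (d⁻¹ • adjMat G) = (c ^ m * d⁻¹) • adjMat G := smul_smul _ _ _
        rw [this, hstep]
        match_scalars <;> ring
  refine ⟨hPsiD, hPsiA, hiter, ?_⟩
  have hc0 : 0 ≤ c := by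
    apply div_nonneg _ (by positivity)
    have : (2:ℝ) ≤ n := by exact_mod_cast hn
    linarith
  have hc1 : c < 1 := by
    rw [div_lt_one (by positivity)]
    linarith
  have htend : Filter.Tendsto (fun k : ℕ => c ^ k) Filter.atTop (nhds 0) :=
    tendsto_pow_atTop_nhds_zero_of_lt_one hc0 hc1
  have h2 : Filter.Tendsto
      (fun k : ℕ => d⁻¹ • degMat G - c ^ k • (d⁻¹ • adjMat G))
      Filter.atTop (nhds (d⁻¹ • degMat G)) := by
    have := (tendsto_const_nhds (x := d⁻¹ • degMat G) (f := Filter.atTop (α := ℕ))).sub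
      (htend.smul_const (d⁻¹ • adjMat G))
    simpa using this
  refine h2.congr' ?_
  filter_upwards [Filter.eventually_ge_atTop 1] with k hk
  exact (hiter k hk).symm
end
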